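/- For integers 2 ≤ k ≤ n, any graph G on n vertices with at least n + k − 2 + C(n−2, 2) edges is (k+1)-dense. Consequently, every k*-dense graph on n vertices has at most n + k − 3 + C(n−2, 2) edges. -/

import Mathlib

open Finset

/-- A graph `G` is `k`-dense if every two adjacent vertices have at least `k - 2`
common neighbors. -/
def kDense {V : Type*} (G : SimpleGraph V) (k : ℕ) : Prop :=
  ∀ u v : V, G.Adj u v → k - 2 ≤ (G.neighborSet u ∩ G.neighborSet v).ncard

/-- A graph is `k*`-dense if it is `k`-dense but not `(k+1)`-dense. -/
def kStarDense {V : Type*} (G : SimpleGraph V) (k : ℕ) : Prop :=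
  kDense G k ∧ ¬ kDense G (k + 1)

lemma dense_of_many_edges (k n : ℕ) (hk : 2 ≤ k) (hkn : k ≤ n)
    (G : SimpleGraph (Fin n))
    (hE : n + k - 2 + Nat.choose (n - 2) 2 ≤ G.edgeSet.ncard) :
    ∀ u v : Fin n, G.Adj u v →
      (k + 1) - 2 ≤ (G.neighborSet u ∩ G.neighborSet v).ncard := by
  classical
  intro u v huv
  have hne : u ≠ v := huv.ne
  -- edge count as Finset
  have hEcard : G.edgeSet.ncard = G.edgeFinset.card := by
    rw [Set.ncard_eq_toFinset_card']
    congr 1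
  rw [hEcard] at hE
  set t : Finset (Fin n) := (univ.erase u).erase v with ht
  have htcard : t.card = n - 2 := by
    rw [ht, card_erase_of_mem (by simp [hne.symm]), card_erase_of_mem (by simp), card_univ, Fintype.card_fin]
    omega
  -- split edges
  set P : Sym2 (Fin n) → Prop := fun e => u ∈ e ∨ v ∈ e with hP
  have hsplit : G.edgeFinset.card =
      (G.edgeFinset.filter P).card + (G.edgeFinset.filter (fun e => ¬ P e)).card :=
    (card_filter_add_card_filter_not _).symm
  -- bound on edges avoiding u and v
  have hS : (G.edgeFinset.filter (fun e => ¬ P e)).card ≤ Nat.choose (n - 2) 2 := by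
    have hsub : G.edgeFinset.filter (fun e => ¬ P e) ⊆ t.sym2 \ t.image Sym2.diag := by
      intro e he
      rw [mem_filter] at he
      obtain ⟨heE, heP⟩ := he
      rw [mem_sdiff]
      constructor
      · rw [mem_sym2_iff]
        intro a ha
        rw [ht]
        simp only [mem_erase, mem_univ, and_true]
        simp only [hP, not_or] at heP
        exact ⟨fun h => heP.2 (h ▸ ha), fun h => heP.1 (h ▸ ha)⟩
      · intro hmem
        obtain ⟨a, _, ha⟩ := mem_image.mp hmem
        have : e.IsDiag := ha ▸ Sym2.diag_isDiag a
        exact SimpleGraph.not_isDiag_of_mem_edgeFinset heE this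
    have hdiagsub : t.image Sym2.diag ⊆ t.sym2 := by
      intro e he
      obtain ⟨a, ha, rfl⟩ := mem_image.mp he
      rw [Sym2.diag, mk_mem_sym2_iff]; exact ⟨ha, ha⟩
    have h1 : (t.sym2 \ t.image Sym2.diag).card = t.sym2.card - t.card := by
      rw [card_sdiff_of_subset hdiagsub, card_image_of_injective _ Sym2.diag_injective]
    have h2 := card_le_card hsub
    rw [h1, card_sym2, htcard] at h2
    have h3 : Nat.choose (n - 2 + 1) 2 = (n - 2) + Nat.choose (n - 2) 2 := by
      rw [Nat.choose_succ_succ]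
      simp [Nat.choose_one_right]
    omega
  -- bound filter P by degrees
  have hinc : (G.edgeFinset.filter P) = G.incidenceFinset u ∪ G.incidenceFinset v := by
    rw [SimpleGraph.incidenceFinset_eq_filter, SimpleGraph.incidenceFinset_eq_filter,
      ← filter_or]
  have hPcard : (G.edgeFinset.filter P).card + 1 ≤ G.degree u + G.degree v := by
    have huni := card_union_add_card_inter (G.incidenceFinset u) (G.incidenceFinset v)
    have hmemint : s(u, v) ∈ G.incidenceFinset u ∩ G.incidenceFinset v := by
      rw [mem_inter, SimpleGraph.mem_incidenceFinset, SimpleGraph.mem_incidenceFinset]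
      exact ⟨⟨(SimpleGraph.mem_edgeSet G).mpr huv, by simp⟩, ⟨(SimpleGraph.mem_edgeSet G).mpr huv, by simp⟩⟩
    have hint : 1 ≤ (G.incidenceFinset u ∩ G.incidenceFinset v).card :=
      card_pos.mpr ⟨_, hmemint⟩
    rw [hinc]
    rw [SimpleGraph.card_incidenceFinset_eq_degree,
      SimpleGraph.card_incidenceFinset_eq_degree] at huni
    omega
  -- degree sum bound
  have hdeg : n + k - 1 ≤ G.degree u + G.degree v := by omega
  -- common neighbors
  have hcn := card_union_add_card_inter (G.neighborFinset u) (G.neighborFinset v)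
  have hun : (G.neighborFinset u ∪ G.neighborFinset v).card ≤ n := by
    simpa using card_le_card (subset_univ (G.neighborFinset u ∪ G.neighborFinset v))
  rw [SimpleGraph.card_neighborFinset_eq_degree,
    SimpleGraph.card_neighborFinset_eq_degree] at hcn
  have hfin : (G.neighborSet u ∩ G.neighborSet v).ncard
      = (G.neighborFinset u ∩ G.neighborFinset v).card := by
    rw [Set.ncard_eq_toFinset_card', Set.toFinset_inter]; rfl
  rw [hfin]
  omega

theorem edges_upper_bound (k n : ℕ) (hk : 2 ≤ k) (hkn : k ≤ n) :
    (∀ G : SimpleGraph (Fin n),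
      n + k - 2 + Nat.choose (n - 2) 2 ≤ G.edgeSet.ncard → kDense G (k + 1)) ∧
    (∀ G : SimpleGraph (Fin n), kStarDense G k →
      G.edgeSet.ncard ≤ n + k - 3 + Nat.choose (n - 2) 2) := by
  refine ⟨fun G hE => dense_of_many_edges k n hk hkn G hE, fun G ⟨_, hnd⟩ => ?_⟩
  by_contra h
  push_neg at h
  exact hnd (dense_of_many_edges k n hk hkn G (by omega))
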